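/- For positive integers r, n, k, the r-Ramanujan sum satisfies c_r(n,k) = Σ_{d | gcd*(n,k)} d^r μ(k/d), where the sum is over divisors d of k with d^r | n and μ is the Möbius function. Equivalently, c_r(n,k) is an integer. -/

import Mathlib

open Finset

/-- Cohen's `r`-Ramanujan sum. -/
noncomputable def ramcr (r n k : ℕ) : ℂ :=
  ∑ m ∈ (Finset.Icc 1 (k ^ r)).filter
      (fun m => ∀ d ∈ Finset.Icc 2 (k ^ r), ¬(d ^ r ∣ m ∧ d ^ r ∣ k ^ r)),
    Complex.exp (2 * Real.pi * Complex.I * m * n / (k ^ r))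

lemma ramcr_gcd_pow (a b n : ℕ) : Nat.gcd (a ^ n) (b ^ n) = Nat.gcd a b ^ n := by
  rcases Nat.eq_zero_or_pos a with ha | ha
  · subst ha
    rcases Nat.eq_zero_or_pos n with hn | hn
    · subst hn; simp
    · simp [Nat.zero_pow hn]
  · have hgpos : 0 < Nat.gcd a b := Nat.gcd_pos_of_pos_left b ha
    obtain ⟨a', ha'⟩ := Nat.gcd_dvd_left a b
    obtain ⟨b', hb'⟩ := Nat.gcd_dvd_right a b
    have hg1 : Nat.gcd a' b' = 1 := by
      apply Nat.eq_of_mul_eq_mul_left hgpos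
      rw [← Nat.gcd_mul_left, ← ha', ← hb', mul_one]
    have h3 : Nat.gcd (a' ^ n) (b' ^ n) = 1 := Nat.Coprime.pow n n hg1
    rw [show a ^ n = (Nat.gcd a b * a') ^ n by rw [← ha'],
        show b ^ n = (Nat.gcd a b * b') ^ n by rw [← hb']]
    rw [mul_pow, mul_pow, Nat.gcd_mul_left, h3, mul_one]

lemma ramcr_lcm_pow {f g : ℕ} (r : ℕ) (hf : 0 < f) (hg : 0 < g) :
    Nat.lcm f g ^ r = Nat.lcm (f ^ r) (g ^ r) := by
  have hgcd : 0 < Nat.gcd f g ^ r := pow_pos (Nat.gcd_pos_of_pos_left _ hf) r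
  apply Nat.eq_of_mul_eq_mul_right hgcd
  calc Nat.lcm f g ^ r * Nat.gcd f g ^ r = (Nat.gcd f g * Nat.lcm f g) ^ r := by
        rw [mul_pow]; ring
    _ = (f * g) ^ r := by rw [Nat.gcd_mul_lcm]
    _ = Nat.gcd (f ^ r) (g ^ r) * Nat.lcm (f ^ r) (g ^ r) := by rw [Nat.gcd_mul_lcm, mul_pow]
    _ = Nat.lcm (f ^ r) (g ^ r) * Nat.gcd f g ^ r := by rw [ramcr_gcd_pow, mul_comm]

/-- The coprimality condition in `ramcr` rephrased. -/
lemma ramcr_cond_iff {r k : ℕ} (m : ℕ) (hr : 0 < r) (hk : 0 < k) :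
    (∀ d ∈ Finset.Icc 2 (k ^ r), ¬(d ^ r ∣ m ∧ d ^ r ∣ k ^ r)) ↔
      ∀ d, d ∣ k → d ^ r ∣ m → d = 1 := by
  constructor
  · intro h d hdk hdm
    by_contra hd1
    have hd0 : 0 < d := Nat.pos_of_dvd_of_pos hdk hk
    have hd2 : 2 ≤ d := by omega
    have hdle : d ≤ k ^ r := le_trans (Nat.le_of_dvd hk hdk) (Nat.le_self_pow hr.ne' k)
    exact h d (Finset.mem_Icc.mpr ⟨hd2, hdle⟩) ⟨hdm, pow_dvd_pow_of_dvd hdk r⟩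
  · rintro h d hd ⟨h1, h2⟩
    have hdk : d ∣ k := (Nat.pow_dvd_pow_iff hr.ne').mp h2
    have := h d hdk h1
    have := Finset.mem_Icc.mp hd
    omega

/-- Full sum of roots of unity. -/
lemma ramcr_sum_exp (N n : ℕ) (hN : 0 < N) :
    ∑ m ∈ Finset.Icc 1 N, Complex.exp (2 * Real.pi * Complex.I * m * n / N)
      = if N ∣ n then ((N : ℕ) : ℂ) else 0 := by
  have hN0 : (N : ℂ) ≠ 0 := Nat.cast_ne_zero.mpr hN.ne'
  split_ifs with hdvd
  · obtain ⟨c, rfl⟩ := hdvd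
    have hone : ∀ m ∈ Finset.Icc 1 N,
        Complex.exp (2 * Real.pi * Complex.I * m * (N * c) / N) = 1 := by
      intro m _
      have harg : (2 : ℂ) * Real.pi * Complex.I * m * ((N : ℂ) * (c : ℂ)) / N
          = ((m * c : ℕ) : ℤ) * (2 * Real.pi * Complex.I) := by
        push_cast
        field_simp
      rw [harg, Complex.exp_int_mul_two_pi_mul_I]
    push_cast
    rw [Finset.sum_congr rfl hone, Finset.sum_const, Nat.card_Icc]
    simp
  · set z : ℂ := Complex.exp (2 * Real.pi * Complex.I * n / N) with hz
    have hterm : ∀ m : ℕ, Complex.exp (2 * Real.pi * Complex.I * m * n / N) = z ^ m := by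
      intro m
      rw [hz, ← Complex.exp_nat_mul]
      congr 1
      field_simp
    have hzN : z ^ N = 1 := by
      rw [hz, ← Complex.exp_nat_mul]
      have harg : (N : ℂ) * (2 * Real.pi * Complex.I * n / N)
          = ((n : ℕ) : ℤ) * (2 * Real.pi * Complex.I) := by
        push_cast
        field_simp
      rw [harg, Complex.exp_int_mul_two_pi_mul_I]
    have hz1 : z ≠ 1 := by
      intro h
      obtain ⟨j, hj⟩ := Complex.exp_eq_one_iff.mp (hz ▸ h)
      have h2pi : (2 : ℂ) * Real.pi * Complex.I ≠ 0 := by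
        simp [Real.pi_ne_zero, Complex.I_ne_zero]
      have hnj : (n : ℂ) = j * N := by
        field_simp at hj
        have := hj
        -- hj : 2 * π * I * n = j * (2 * π * I) * N  (up to arrangement)
        apply mul_left_cancel₀ h2pi
        linear_combination (2 * Real.pi * Complex.I) * hj
      have hnj' : (n : ℤ) = j * N := by exact_mod_cast hnj
      exact hdvd (Int.natCast_dvd_natCast.mp ⟨j, by rw [hnj', mul_comm]⟩)
    calc ∑ m ∈ Finset.Icc 1 N, Complex.exp (2 * Real.pi * Complex.I * m * n / N)
        = ∑ m ∈ Finset.Icc 1 N, z ^ m := Finset.sum_congr rfl fun m _ => hterm m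
      _ = ∑ i ∈ Finset.range (N + 1 - 1), z ^ (1 + i) := by
          rw [← Finset.Ico_add_one_right_eq_Icc, Finset.sum_Ico_eq_sum_range]
      _ = z * ∑ i ∈ Finset.range N, z ^ i := by
          rw [Finset.mul_sum]
          refine Finset.sum_congr (by norm_num) fun i _ => ?_
          rw [pow_add, pow_one]
      _ = z * ((z ^ N - 1) / (z - 1)) := by rw [geom_sum_eq hz1]
      _ = 0 := by rw [hzN]; simp

lemma ramcr_partition (r n : ℕ) (hr : 0 < r) :
    ∀ k, 0 < k → ∑ e ∈ k.divisors, ramcr r n e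
      = if k ^ r ∣ n then ((k ^ r : ℕ) : ℂ) else 0 := by
  intro k hk
  rw [← ramcr_sum_exp (k ^ r) n (pow_pos hk r)]
  simp only [ramcr]
  rw [Finset.sum_sigma']
  refine Finset.sum_bij (fun p _ => (k / p.1) ^ r * p.2) ?_ ?_ ?_ ?_
  · rintro ⟨e, m'⟩ hp
    simp only [Finset.mem_sigma, Nat.mem_divisors, Finset.mem_filter] at hp
    obtain ⟨⟨hek, -⟩, hmIcc, -⟩ := hp
    obtain ⟨hm1, hm2⟩ := Finset.mem_Icc.mp hmIcc
    have hepos : 0 < e := Nat.pos_of_dvd_of_pos hek hk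
    have hfpos : 0 < k / e := Nat.div_pos (Nat.le_of_dvd hk hek) hepos
    simp only
    refine Finset.mem_Icc.mpr ⟨?_, ?_⟩
    · have : 0 < (k / e) ^ r * m' := Nat.mul_pos (pow_pos hfpos r) (by omega)
      omega
    · calc (k / e) ^ r * m' ≤ (k / e) ^ r * e ^ r := Nat.mul_le_mul_left _ hm2
        _ = (k / e * e) ^ r := (mul_pow _ _ _).symm
        _ = k ^ r := by rw [Nat.div_mul_cancel hek]
  · rintro ⟨e1, m1⟩ h1 ⟨e2, m2⟩ h2 heq
    simp only [Finset.mem_sigma, Nat.mem_divisors, Finset.mem_filter] at h1 h2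
    obtain ⟨⟨he1, -⟩, hmI1, hc1⟩ := h1
    obtain ⟨⟨he2, -⟩, hmI2, hc2⟩ := h2
    obtain ⟨hm11, hm12⟩ := Finset.mem_Icc.mp hmI1
    obtain ⟨hm21, hm22⟩ := Finset.mem_Icc.mp hmI2
    have he1pos : 0 < e1 := Nat.pos_of_dvd_of_pos he1 hk
    have he2pos : 0 < e2 := Nat.pos_of_dvd_of_pos he2 hk
    set f1 := k / e1 with hf1def
    set f2 := k / e2 with hf2def
    have hf1pos : 0 < f1 := Nat.div_pos (Nat.le_of_dvd hk he1) he1pos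
    have hf2pos : 0 < f2 := Nat.div_pos (Nat.le_of_dvd hk he2) he2pos
    have hf1k : f1 ∣ k := Nat.div_dvd_of_dvd he1
    have hf2k : f2 ∣ k := Nat.div_dvd_of_dvd he2
    have hk1 : f1 * e1 = k := Nat.div_mul_cancel he1
    have hk2 : f2 * e2 = k := Nat.div_mul_cancel he2
    simp only at heq
    -- key : for any (e, m', f) setup, lcm f1 f2 = f1 and = f2
    have key : ∀ e m' f : ℕ, e ∣ k → f * e = k → 0 < f → 0 < e →
        (∀ d, d ∣ e → d ^ r ∣ m' → d = 1) →
        Nat.lcm f1 f2 ^ r ∣ f ^ r * m' → f ∣ Nat.lcm f1 f2 → Nat.lcm f1 f2 ∣ k →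
        Nat.lcm f1 f2 = f := by
      intro e m' f hek hfe hfpos hepos hcond hlm hfl hlk
      obtain ⟨u, hu⟩ := hfl
      have hue : u ∣ e := by
        have : f * u ∣ f * e := by rw [← hu, hfe]; exact hlk
        exact (Nat.mul_dvd_mul_iff_left hfpos).mp this
      have hum : u ^ r ∣ m' := by
        have : f ^ r * u ^ r ∣ f ^ r * m' := by
          rw [← mul_pow, ← hu]; exact hlm
        exact (Nat.mul_dvd_mul_iff_left (pow_pos hfpos r)).mp this
      have := hcond u hue hum
      rw [hu, this, mul_one]
    have hl1 : f1 ^ r ∣ f1 ^ r * m1 := dvd_mul_right _ _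
    have hl2 : f2 ^ r ∣ f1 ^ r * m1 := heq ▸ dvd_mul_right _ _
    have hlm : Nat.lcm f1 f2 ^ r ∣ f1 ^ r * m1 := by
      rw [ramcr_lcm_pow r hf1pos hf2pos]
      exact Nat.lcm_dvd hl1 hl2
    have hlk : Nat.lcm f1 f2 ∣ k := Nat.lcm_dvd hf1k hf2k
    have hcond1 := (ramcr_cond_iff m1 hr he1pos).mp hc1
    have hcond2 := (ramcr_cond_iff m2 hr he2pos).mp hc2
    have e1eq : Nat.lcm f1 f2 = f1 :=
      key e1 m1 f1 he1 hk1 hf1pos he1pos hcond1 hlm (Nat.dvd_lcm_left _ _) hlk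
    have e2eq : Nat.lcm f1 f2 = f2 :=
      key e2 m2 f2 he2 hk2 hf2pos he2pos hcond2 (heq ▸ hlm) (Nat.dvd_lcm_right _ _) hlk
    have hff : f1 = f2 := e1eq ▸ e2eq
    have hee : e1 = e2 := by
      have d1 : k / f1 = e1 := by rw [hf1def, Nat.div_div_self he1 hk.ne']
      have d2 : k / f2 = e2 := by rw [hf2def, Nat.div_div_self he2 hk.ne']
      rw [← d1, ← d2, hff]
    subst hee
    have hmm : m1 = m2 := by
      have : f1 ^ r * m1 = f1 ^ r * m2 := by rw [heq, hff]
      exact Nat.eq_of_mul_eq_mul_left (pow_pos hf1pos r) this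
    subst hmm
    rfl
  · intro m hm
    rw [Finset.mem_Icc] at hm
    set T := k.divisors.filter (fun d => d ^ r ∣ m) with hT
    have h1T : 1 ∈ T := by
      rw [hT, Finset.mem_filter, Nat.mem_divisors]
      exact ⟨⟨one_dvd k, hk.ne'⟩, by simp⟩
    set f := T.max' ⟨1, h1T⟩ with hfdef
    have hfT : f ∈ T := T.max'_mem _
    rw [hT, Finset.mem_filter, Nat.mem_divisors] at hfT
    obtain ⟨⟨hfk, -⟩, hfrm⟩ := hfT
    have hfpos : 0 < f := Nat.pos_of_dvd_of_pos hfk hk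
    set e := k / f with hedef
    set m' := m / f ^ r with hm'def
    have hek : e ∣ k := Nat.div_dvd_of_dvd hfk
    have hepos : 0 < e := Nat.div_pos (Nat.le_of_dvd hk hfk) hfpos
    have hfe : f * e = k := Nat.mul_div_cancel' hfk
    have hmeq : f ^ r * m' = m := Nat.mul_div_cancel' hfrm
    have hm'pos : 0 < m' := by
      rcases Nat.eq_zero_or_pos m' with h | h
      · rw [h, mul_zero] at hmeq; omega
      · exact h
    have hm'le : m' ≤ e ^ r := by
      have : f ^ r * m' ≤ f ^ r * e ^ r := by
        rw [hmeq, ← mul_pow, hfe]; exact hm.2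
      exact Nat.le_of_mul_le_mul_left this (pow_pos hfpos r)
    have hcond : ∀ d ∈ Finset.Icc 2 (e ^ r), ¬(d ^ r ∣ m' ∧ d ^ r ∣ e ^ r) := by
      refine (ramcr_cond_iff m' hr hepos).mpr ?_
      intro d hde hdm
      have hfd : f * d ∈ T := by
        rw [hT, Finset.mem_filter, Nat.mem_divisors]
        refine ⟨⟨?_, hk.ne'⟩, ?_⟩
        · rw [← hfe]; exact mul_dvd_mul_left f hde
        · rw [mul_pow, ← hmeq]; exact mul_dvd_mul_left _ hdm
      have hle : f * d ≤ f := T.le_max' _ hfd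
      have hdpos : 0 < d := Nat.pos_of_dvd_of_pos hde hepos
      nlinarith
    refine ⟨⟨e, m'⟩, ?_, ?_⟩
    · exact Finset.mem_sigma.mpr ⟨Nat.mem_divisors.mpr ⟨hek, hk.ne'⟩,
        Finset.mem_filter.mpr ⟨Finset.mem_Icc.mpr ⟨hm'pos, hm'le⟩, hcond⟩⟩
    · simp only
      rw [hedef, Nat.div_div_self hfk hk.ne', hmeq]
  · rintro ⟨e, m'⟩ hp
    simp only [Finset.mem_sigma, Nat.mem_divisors, Finset.mem_filter] at hp
    obtain ⟨⟨hek, -⟩, -, -⟩ := hp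
    have hepos : 0 < e := Nat.pos_of_dvd_of_pos hek hk
    have hfpos : 0 < k / e := Nat.div_pos (Nat.le_of_dvd hk hek) hepos
    have he0 : (e : ℂ) ≠ 0 := Nat.cast_ne_zero.mpr hepos.ne'
    have hf0 : ((k / e : ℕ) : ℂ) ≠ 0 := Nat.cast_ne_zero.mpr hfpos.ne'
    have hk0 : (k : ℂ) ≠ 0 := Nat.cast_ne_zero.mpr hk.ne'
    have hkr : (k : ℂ) ^ r = (e : ℂ) ^ r * ((k / e : ℕ) : ℂ) ^ r := by
      rw [← mul_pow]
      congr 1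
      have : e * (k / e) = k := Nat.mul_div_cancel' hek
      exact_mod_cast this.symm
    simp only
    congr 1
    push_cast
    rw [div_eq_div_iff (pow_ne_zero r he0) (pow_ne_zero r hk0), hkr]
    ring

/-- Cohen's Hölder-type evaluation `c_r(n,k) = Σ_{d|k, d^r|n} d^r μ(k/d)`;
in particular `c_r(n,k)` is an integer. -/
theorem stmt18 (r n k : ℕ) (hr : 0 < r) (hn : 0 < n) (hk : 0 < k) :
    ramcr r n k
      = ∑ d ∈ k.divisors.filter (fun d => d ^ r ∣ n),
          (d : ℂ) ^ r * ((ArithmeticFunction.moebius (k / d) : ℤ) : ℂ) := by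
  set g : ℕ → ℂ := fun j => if j ^ r ∣ n then ((j ^ r : ℕ) : ℂ) else 0 with hg
  have h1 : ∀ j > 0, ∑ i ∈ j.divisors, ramcr r n i = g j := fun j hj =>
    ramcr_partition r n hr j hj
  have h2 := (ArithmeticFunction.sum_eq_iff_sum_smul_moebius_eq
    (f := ramcr r n) (g := g)).mp h1 k hk
  rw [← h2]
  rw [Nat.sum_divisorsAntidiagonal' (f := fun a b => (ArithmeticFunction.moebius a) • g b)]
  rw [Finset.sum_filter]
  refine Finset.sum_congr rfl fun d hd => ?_
  simp only [hg]
  split_ifs with h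
  · rw [zsmul_eq_mul]
    push_cast
    ring
  · simp
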